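/- arXiv:2204.12599 — 3 statements merged into one kernel-verified Lean document; each statement's English description precedes it below -/
import Mathlib

section
/- For any swap Schelling game (G,b,Λ) on a δ-regular graph G with Λ < 1/δ, every swap equilibrium σ satisfies DoI(σ) ≥ 2b; consequently, for every swap equilibrium σ and every strategy profile σ*, DoI(σ*)/DoI(σ) ≤ min{(δ+1)/2, n/(2b)}. -/
open Finset

namespace SwapSchelling

variable {V : Type*} [Fintype V] [DecidableEq V]

open scoped Classical in
/-- The closed neighborhood `N[v]` of a node `v` in `G`, as a `Finset`. -/
noncomputable def closedNbhd (G : SimpleGraph V) (v : V) : Finset V :=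
  univ.filter (fun u => u = v ∨ G.Adj v u)

open scoped Classical in
/-- The degree `δ(v)` of a node `v` in `G`. -/
noncomputable def deg (G : SimpleGraph V) (v : V) : ℕ :=
  (univ.filter (fun u => G.Adj v u)).card

/-- The maximum degree `Δ(G)`. -/
noncomputable def maxDeg (G : SimpleGraph V) : ℕ := univ.sup (deg G)

/-- The minimum degree `δ(G)`. -/
noncomputable def minDeg (G : SimpleGraph V) : ℕ := sInf (Set.range (deg G))

open scoped Classical in
/-- `frac G c v` is the fraction of nodes in the closed neighborhood of `v` that have
the same color as `v` (that is, `f_i(σ)` for the agent `i` occupying node `v`). -/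
noncomputable def frac (G : SimpleGraph V) (c : V → Bool) (v : V) : ℝ :=
  (((closedNbhd G v).filter (fun u => c u = c v)).card : ℝ) / ((closedNbhd G v).card : ℝ)

/-- The coloring obtained from `c` after the agents on nodes `v` and `w` swap positions. -/
def swapColor (c : V → Bool) (v w : V) : V → Bool := c ∘ Equiv.swap v w

/-- A single-peaked utility function `p` with peak at `Λ`: `p 0 = 0`, `p` is strictly
increasing on `[0,Λ]`, `p Λ = 1`, and `p x = p (Λ(1-x)/(1-Λ))` for `x ∈ [Λ,1]`. -/
structure IsSinglePeaked (p : ℝ → ℝ) (Λ : ℝ) : Prop where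
  peak_mem : Λ ∈ Set.Ioo (0 : ℝ) 1
  map_zero : p 0 = 0
  strictMonoOn : StrictMonoOn p (Set.Icc 0 Λ)
  map_peak : p Λ = 1
  symm : ∀ x ∈ Set.Icc Λ 1, p x = p (Λ * (1 - x) / (1 - Λ))

/-- A strategy profile: a 2-coloring of the nodes with exactly `b` blue (`true`) nodes. -/
def IsProfile (c : V → Bool) (b : ℕ) : Prop :=
  (univ.filter (fun v => c v = true)).card = b

/-- The structural data of a swap Schelling game `(G, b, Λ)` with utility function `p`:
`G` is connected, there are `b` blue agents with `1 ≤ b ≤ n/2`, and `p` is a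
single-peaked utility function with peak `Λ`. -/
structure IsGame (G : SimpleGraph V) (b : ℕ) (Λ : ℝ) (p : ℝ → ℝ) : Prop where
  connected : G.Connected
  one_le_b : 1 ≤ b
  b_le_half : 2 * b ≤ Fintype.card V
  singlePeaked : IsSinglePeaked p Λ

/-- The swap of the two (differently colored) agents occupying nodes `v` and `w`
is profitable: both agents strictly increase their utility. -/
def ProfitableSwap (G : SimpleGraph V) (p : ℝ → ℝ) (c : V → Bool) (v w : V) : Prop :=
  c v ≠ c w ∧
  p (frac G (swapColor c v w) w) > p (frac G c v) ∧
  p (frac G (swapColor c v w) v) > p (frac G c w)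

/-- A swap equilibrium: no profitable swap exists. -/
def IsSwapEquilibrium (G : SimpleGraph V) (p : ℝ → ℝ) (c : V → Bool) : Prop :=
  ∀ v w, ¬ ProfitableSwap G p c v w

open scoped Classical in
/-- The degree of integration: the number of non-segregated agents. -/
noncomputable def DoI (G : SimpleGraph V) (c : V → Bool) : ℕ :=
  (univ.filter (fun v => frac G c v ≠ 1)).card

open scoped Classical in
/-- The number of monochromatic edges of `G` under the coloring `c`. -/
noncomputable def Phi (G : SimpleGraph V) (c : V → Bool) : ℕ :=
  (G.edgeFinset.filter (fun e => ∀ u ∈ e, ∀ w ∈ e, c u = c w)).card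

open scoped Classical in
/-- The number of edges of `G`. -/
noncomputable def numEdges (G : SimpleGraph V) : ℕ :=
  (univ.filter (fun e : Sym2 V => e ∈ G.edgeSet)).card

/-- A finset of nodes is an independent set of `G`. -/
def IsIndepSet (G : SimpleGraph V) (s : Finset V) : Prop :=
  ∀ u ∈ s, ∀ w ∈ s, ¬ G.Adj u w

open scoped Classical in
/-- The independence number `α(G)`. -/
noncomputable def indepNum (G : SimpleGraph V) : ℕ :=
  univ.sup (fun s : Finset V => if IsIndepSet G s then s.card else 0)

open scoped Classical in
/-- The degree of `v` inside the subgraph of `G` induced by the node set `s`. -/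
noncomputable def degOn (G : SimpleGraph V) (s : Finset V) (v : V) : ℕ :=
  (s.filter (fun u => G.Adj v u)).card



section Aux

open scoped Classical

lemma mem_closedNbhd {G : SimpleGraph V} {v u : V} :
    u ∈ closedNbhd G v ↔ u = v ∨ G.Adj v u := by
  simp [closedNbhd]

lemma card_closedNbhd (G : SimpleGraph V) (v : V) :
    (closedNbhd G v).card = deg G v + 1 := by
  have h : closedNbhd G v = insert v (univ.filter (fun u => G.Adj v u)) := by
    ext u; simp [closedNbhd]
  rw [h, card_insert_of_notMem (by simp), deg]

lemma frac_eq_card_div (G : SimpleGraph V) (c : V → Bool) (v : V) :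
    frac G c v
      = (((closedNbhd G v).filter (fun u => c u = c v)).card : ℝ) / ((deg G v : ℝ) + 1) := by
  rw [frac, card_closedNbhd]; push_cast; ring_nf

lemma frac_eq_one_iff {G : SimpleGraph V} {c : V → Bool} {v : V} :
    frac G c v = 1 ↔ ∀ u, G.Adj v u → c u = c v := by
  have hcard : ((closedNbhd G v).card : ℝ) ≠ 0 := by
    rw [card_closedNbhd]; positivity
  rw [frac, div_eq_one_iff_eq hcard, Nat.cast_inj]
  constructor
  · intro h u hu
    have hfe : (closedNbhd G v).filter (fun u => c u = c v) = closedNbhd G v :=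
      eq_of_subset_of_card_le (filter_subset _ _) (le_of_eq h.symm)
    have hm : u ∈ (closedNbhd G v).filter (fun u => c u = c v) := by
      rw [hfe]; exact mem_closedNbhd.2 (Or.inr hu)
    exact (mem_filter.1 hm).2
  · intro h
    rw [filter_true_of_mem]
    intro u hu
    rcases mem_closedNbhd.1 hu with rfl | hadj
    · rfl
    · exact h u hadj

lemma p_pos {p : ℝ → ℝ} {Λ : ℝ} (h : IsSinglePeaked p Λ) {x : ℝ}
    (hx0 : 0 < x) (hx1 : x < 1) : 0 < p x := by
  obtain ⟨hΛ0, hΛ1⟩ := h.peak_mem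
  rcases le_or_gt x Λ with hxle | hxgt
  · have := h.strictMonoOn (Set.mem_Icc.2 ⟨le_refl 0, hΛ0.le⟩) (Set.mem_Icc.2 ⟨hx0.le, hxle⟩) hx0
    rwa [h.map_zero] at this
  · have hsym := h.symm x (Set.mem_Icc.2 ⟨hxgt.le, hx1.le⟩)
    have hy0 : 0 < Λ * (1 - x) / (1 - Λ) :=
      div_pos (mul_pos hΛ0 (by linarith)) (by linarith)
    have hyΛ : Λ * (1 - x) / (1 - Λ) ≤ Λ := by
      rw [div_le_iff₀ (by linarith)]; nlinarith
    have hlt := h.strictMonoOn (Set.mem_Icc.2 ⟨le_refl 0, hΛ0.le⟩)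
      (Set.mem_Icc.2 ⟨hy0.le, hyΛ⟩) hy0
    rw [h.map_zero] at hlt
    rw [hsym]; exact hlt

lemma p_one {p : ℝ → ℝ} {Λ : ℝ} (h : IsSinglePeaked p Λ) : p 1 = 0 := by
  obtain ⟨hΛ0, hΛ1⟩ := h.peak_mem
  have hs := h.symm 1 (Set.mem_Icc.2 ⟨hΛ1.le, le_refl 1⟩)
  rw [hs]; norm_num [h.map_zero]

lemma p_lt_best {p : ℝ → ℝ} {Λ : ℝ} (h : IsSinglePeaked p Λ) {δ : ℕ} (hδ : 1 ≤ δ)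
    (hΛδ : Λ < 1 / (δ : ℝ)) {k : ℕ} (hk2 : 2 ≤ k) (hk : k ≤ δ + 1) :
    p ((k : ℝ) / ((δ : ℝ) + 1)) < p (1 / ((δ : ℝ) + 1)) := by
  obtain ⟨hΛ0, hΛ1⟩ := h.peak_mem
  have hD1 : (1 : ℝ) ≤ (δ : ℝ) := by exact_mod_cast hδ
  have hK2 : (2 : ℝ) ≤ (k : ℝ) := by exact_mod_cast hk2
  have hKle : (k : ℝ) ≤ (δ : ℝ) + 1 := by exact_mod_cast hk
  have hD0 : (0 : ℝ) < (δ : ℝ) + 1 := by linarith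
  have hΛD : Λ * (δ : ℝ) < 1 := by
    have := (lt_div_iff₀ (by linarith : (0:ℝ) < (δ:ℝ))).1 hΛδ
    linarith
  set x : ℝ := (k : ℝ) / ((δ : ℝ) + 1) with hxdef
  have hxΛ : Λ ≤ x := by
    rw [hxdef, le_div_iff₀ hD0]
    nlinarith
  have hx1 : x ≤ 1 := by rw [hxdef, div_le_one hD0]; linarith
  have hsymx := h.symm x (Set.mem_Icc.2 ⟨hxΛ, hx1⟩)
  set y : ℝ := Λ * (1 - x) / (1 - Λ) with hydef
  have h1Λ : (0:ℝ) < 1 - Λ := by linarith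
  have hy0 : 0 ≤ y := by
    rw [hydef]
    apply div_nonneg (mul_nonneg hΛ0.le (by linarith)) h1Λ.le
  have hyΛ : y ≤ Λ := by
    rw [hydef, div_le_iff₀ h1Λ]; nlinarith
  have hylt : y < 1 / ((δ : ℝ) + 1) := by
    rw [hydef, div_lt_div_iff₀ h1Λ hD0]
    have h1x : (1 - x) * ((δ:ℝ) + 1) = (δ:ℝ) + 1 - (k:ℝ) := by
      rw [hxdef]; field_simp
    nlinarith
  rw [hsymx]
  rcases le_or_gt (1 / ((δ : ℝ) + 1)) Λ with hc | hc
  · exact h.strictMonoOn (Set.mem_Icc.2 ⟨hy0, hyΛ⟩)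
      (Set.mem_Icc.2 ⟨by positivity, hc⟩) hylt
  · have hmem : 1 / ((δ : ℝ) + 1) ∈ Set.Icc Λ 1 := by
      constructor
      · exact hc.le
      · rw [div_le_one hD0]; linarith
    have hsymz := h.symm _ hmem
    set z : ℝ := Λ * (1 - 1 / ((δ : ℝ) + 1)) / (1 - Λ) with hzdef
    rw [hsymz]
    have hzΛ : z ≤ Λ := by
      rw [hzdef, div_le_iff₀ h1Λ]
      have : (0:ℝ) < 1 / ((δ:ℝ) + 1) := by positivity
      nlinarith
    have hz0 : 0 ≤ z := by
      rw [hzdef]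
      apply div_nonneg (mul_nonneg hΛ0.le ?_) h1Λ.le
      have : 1 / ((δ:ℝ) + 1) ≤ 1 := by rw [div_le_one hD0]; linarith
      linarith
    have hyz : y < z := by
      rw [hydef, hzdef]
      gcongr
      rw [hxdef, div_lt_div_iff₀ hD0 hD0]
      nlinarith
    exact h.strictMonoOn (Set.mem_Icc.2 ⟨hy0, hyΛ⟩) (Set.mem_Icc.2 ⟨hz0, hzΛ⟩) hyz

lemma swap_frac_left {G : SimpleGraph V} {c : V → Bool} {v w : V}
    (hnadj : ¬ G.Adj v w) (hseg : ∀ u, G.Adj v u → c u = c v)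
    (hcw : c w ≠ c v) :
    frac G (swapColor c v w) v = 1 / ((deg G v : ℝ) + 1) := by
  have hvw : v ≠ w := fun h => hcw (h ▸ rfl)
  have hfe : (closedNbhd G v).filter
      (fun u => swapColor c v w u = swapColor c v w v) = {v} := by
    ext u
    simp only [mem_filter, mem_singleton, mem_closedNbhd]
    constructor
    · rintro ⟨hu | hadj, hc⟩
      · exact hu
      · exfalso
        have huv : u ≠ v := fun h => G.irrefl (h ▸ hadj)
        have huw : u ≠ w := fun h => hnadj (h ▸ hadj)
        simp only [swapColor, Function.comp_apply,
          Equiv.swap_apply_of_ne_of_ne huv huw, Equiv.swap_apply_left] at hc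
        exact hcw (hc.symm.trans (hseg u hadj)).symm.symm
    · rintro rfl
      exact ⟨Or.inl rfl, rfl⟩
  rw [frac_eq_card_div, hfe, card_singleton, Nat.cast_one]

lemma swap_same_right {G : SimpleGraph V} {c : V → Bool} {v w : V}
    (hnadj : ¬ G.Adj w v) (hcw : c w ≠ c v) :
    ((closedNbhd G w).filter (fun u => swapColor c v w u = swapColor c v w w)).card
      + ((closedNbhd G w).filter (fun u => c u = c w)).card = deg G w + 2 := by
  have hvw : v ≠ w := fun h => hcw (h ▸ rfl)
  have hcw2 : swapColor c v w w = c v := by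
    simp [swapColor, Equiv.swap_apply_right]
  have hfe : (closedNbhd G w).filter
      (fun u => swapColor c v w u = swapColor c v w w)
      = insert w ((closedNbhd G w).filter (fun u => ¬ (c u = c w))) := by
    ext u
    simp only [mem_filter, mem_insert, mem_closedNbhd, hcw2]
    constructor
    · rintro ⟨hmem, hc⟩
      rcases eq_or_ne u w with rfl | huw
      · exact Or.inl rfl
      · right
        refine ⟨hmem, ?_⟩
        have huv : u ≠ v := by
          rintro rfl
          rcases hmem with h | h
          · exact huw h
          · exact hnadj h
        rw [swapColor, Function.comp_apply, Equiv.swap_apply_of_ne_of_ne huv huw] at hc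
        rw [hc]
        exact fun h => hcw h.symm
    · rintro (rfl | ⟨hmem, hc⟩)
      · exact ⟨Or.inl rfl, by rw [swapColor]; simp [Equiv.swap_apply_right]⟩
      · have huw : u ≠ w := fun h => hc (h ▸ rfl)
        have huv : u ≠ v := by
          rintro rfl
          rcases hmem with h | h
          · exact huw h
          · exact hnadj h
        refine ⟨hmem, ?_⟩
        rw [swapColor, Function.comp_apply, Equiv.swap_apply_of_ne_of_ne huv huw]
        rcases Bool.eq_false_or_eq_true (c u) with h | h <;>
          rcases Bool.eq_false_or_eq_true (c w) with h' | h' <;>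
          rcases Bool.eq_false_or_eq_true (c v) with h'' | h'' <;>
          simp_all
  rw [hfe, card_insert_of_notMem (by simp)]
  have hpn := card_filter_add_card_filter_not
    (s := closedNbhd G w) (p := fun u => c u = c w)
  rw [card_closedNbhd] at hpn
  omega

lemma card_le_double_count {G : SimpleGraph V} {δ : ℕ} (hδ : 1 ≤ δ)
    (hreg : ∀ v, deg G v = δ) {S B : Finset V}
    (h : ∀ w ∈ S, ∀ u, G.Adj w u → u ∈ B) : S.card ≤ B.card := by
  have key : ∑ w ∈ S, deg G w = ∑ u ∈ univ, (S.filter (fun w => G.Adj w u)).card := by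
    simp only [deg, card_filter]
    exact Finset.sum_comm
  have hL : ∑ w ∈ S, deg G w = S.card * δ := by
    rw [Finset.sum_congr rfl (fun w _ => hreg w), Finset.sum_const, smul_eq_mul]
  have hzero : ∀ u ∈ univ, u ∉ B → (S.filter (fun w => G.Adj w u)).card = 0 := by
    intro u _ huB
    rw [card_eq_zero, filter_eq_empty_iff]
    intro w hw hadj
    exact huB (h w hw u hadj)
  have hR : ∑ u ∈ univ, (S.filter (fun w => G.Adj w u)).card ≤ B.card * δ := by
    rw [← Finset.sum_subset (subset_univ B) hzero]
    calc ∑ u ∈ B, (S.filter (fun w => G.Adj w u)).card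
        ≤ ∑ u ∈ B, δ := by
          apply Finset.sum_le_sum
          intro u _
          rw [← hreg u, deg]
          apply card_le_card
          intro w hw
          exact mem_filter.2 ⟨mem_univ w, ((mem_filter.1 hw).2).symm⟩
      _ = B.card * δ := by rw [Finset.sum_const, smul_eq_mul]
  have : S.card * δ ≤ B.card * δ := by omega
  exact Nat.le_of_mul_le_mul_right this (by omega)

lemma exists_adj {G : SimpleGraph V} (hconn : G.Connected)
    (hcard : 2 ≤ Fintype.card V) (v : V) : ∃ u, G.Adj v u := by
  obtain ⟨w, hw⟩ := Fintype.exists_ne_of_one_lt_card (by omega) v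
  obtain ⟨pth⟩ := hconn.preconnected v w
  cases pth with
  | nil => exact absurd rfl hw.symm
  | cons h _ => exact ⟨_, h⟩

lemma deg_pos {G : SimpleGraph V} (hconn : G.Connected)
    (hcard : 2 ≤ Fintype.card V) (v : V) : 1 ≤ deg G v := by
  obtain ⟨u, hu⟩ := exists_adj hconn hcard v
  rw [deg]
  exact card_pos.2 ⟨u, mem_filter.2 ⟨mem_univ u, hu⟩⟩


lemma doi_lower {G : SimpleGraph V} {b δ : ℕ} {Λ : ℝ} {p : ℝ → ℝ}
    (hreg : ∀ v, deg G v = δ) (hgame : IsGame G b Λ p) (hΛ : Λ < 1 / (δ : ℝ))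
    (c : V → Bool) (hprof : IsProfile c b) (hse : IsSwapEquilibrium G p c) :
    2 * b ≤ DoI G c := by
  have hb1 := hgame.one_le_b
  have hn := hgame.b_le_half
  have hcard2 : 2 ≤ Fintype.card V := by omega
  have hδ : 1 ≤ δ := by
    obtain ⟨v⟩ : Nonempty V := Fintype.card_pos_iff.1 (by omega)
    rw [← hreg v]; exact deg_pos hgame.connected hcard2 v
  by_cases hall : ∀ v, frac G c v ≠ 1
  · have hDoI : DoI G c = Fintype.card V := by
      rw [DoI, filter_true_of_mem (fun v _ => hall v), card_univ]
    omega
  push_neg at hall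
  obtain ⟨v, hv⟩ := hall
  have hseg : ∀ u, G.Adj v u → c u = c v := frac_eq_one_iff.1 hv
  have hlone : ∀ w, c w ≠ c v → ∀ u, G.Adj w u → c u = c v := by
    intro w hw u hadj
    by_contra hcu
    have hcu' : c u = c w := by
      rcases Bool.eq_false_or_eq_true (c u) with h | h <;>
        rcases Bool.eq_false_or_eq_true (c v) with h' | h' <;>
        rcases Bool.eq_false_or_eq_true (c w) with h'' | h'' <;> simp_all
    have hnadj : ¬ G.Adj v w := fun h => hw (hseg w h)
    set s := ((closedNbhd G w).filter (fun x => c x = c w)).card with hsdef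
    have hs2 : 2 ≤ s := by
      have hsub : ({w, u} : Finset V) ⊆ (closedNbhd G w).filter (fun x => c x = c w) := by
        intro x hx
        rcases mem_insert.1 hx with rfl | hx
        · exact mem_filter.2 ⟨mem_closedNbhd.2 (Or.inl rfl), rfl⟩
        · rw [mem_singleton] at hx; subst hx
          exact mem_filter.2 ⟨mem_closedNbhd.2 (Or.inr hadj), hcu'⟩
      have h2 := card_le_card hsub
      rwa [card_pair (G.ne_of_adj hadj)] at h2
    have hsle : s ≤ δ + 1 := by
      have h3 := card_le_card (filter_subset (fun x => c x = c w) (closedNbhd G w))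
      rwa [card_closedNbhd, hreg] at h3
    apply hse v w
    refine ⟨fun h => hw h.symm, ?_, ?_⟩
    · rw [hv, p_one hgame.singlePeaked]
      set t := ((closedNbhd G w).filter
        (fun x => swapColor c v w x = swapColor c v w w)).card with htdef
      have hts := swap_same_right (fun h => hnadj h.symm) hw
      rw [hreg, ← hsdef, ← htdef] at hts
      have hfw : frac G (swapColor c v w) w = (t : ℝ) / ((δ:ℝ)+1) := by
        rw [frac_eq_card_div, hreg, ← htdef]
      rw [hfw]
      apply p_pos hgame.singlePeaked
      · have ht1 : 1 ≤ t := by omega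
        have : (1:ℝ) ≤ (t:ℝ) := by exact_mod_cast ht1
        positivity
      · rw [div_lt_one (by positivity)]
        have htδ : t ≤ δ := by omega
        have : (t:ℝ) ≤ (δ:ℝ) := by exact_mod_cast htδ
        linarith
    · rw [swap_frac_left hnadj hseg hw, hreg]
      have hfw : frac G c w = (s:ℝ) / ((δ:ℝ)+1) := by
        rw [frac_eq_card_div, hreg, ← hsdef]
      rw [hfw]
      exact p_lt_best hgame.singlePeaked hδ hΛ hs2 hsle
  set S := univ.filter (fun w => c w ≠ c v) with hSdef
  set B := univ.filter (fun u => c u = c v ∧ ∃ w, G.Adj u w ∧ c w ≠ c v) with hBdef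
  have hSB : S.card ≤ B.card := by
    apply card_le_double_count hδ hreg
    intro w hwS u hadj
    have hw := (mem_filter.1 hwS).2
    exact mem_filter.2 ⟨mem_univ u, hlone w hw u hadj, w, hadj.symm, hw⟩
  have hSsub : S ⊆ univ.filter (fun x => frac G c x ≠ 1) := by
    intro w hwS
    have hw := (mem_filter.1 hwS).2
    refine mem_filter.2 ⟨mem_univ w, fun h1 => ?_⟩
    obtain ⟨u, hu⟩ := exists_adj hgame.connected hcard2 w
    exact hw ((frac_eq_one_iff.1 h1 u hu).symm.trans (hlone w hw u hu))
  have hBsub : B ⊆ univ.filter (fun x => frac G c x ≠ 1) := by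
    intro u huB
    obtain ⟨-, hcu, w, hadj, hwne⟩ := mem_filter.1 huB
    exact mem_filter.2 ⟨mem_univ u, fun h1 => hwne ((frac_eq_one_iff.1 h1 w hadj).trans hcu)⟩
  have hdisj : Disjoint S B := by
    rw [disjoint_left]
    intro a haS haB
    exact (mem_filter.1 haS).2 (mem_filter.1 haB).2.1
  have hunion : S.card + B.card ≤ DoI G c := by
    rw [DoI, ← card_union_of_disjoint hdisj]
    exact card_le_card (union_subset hSsub hBsub)
  have hprof' : (univ.filter (fun w => c w = true)).card = b := hprof
  have hScard : b ≤ S.card := by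
    rcases Bool.eq_false_or_eq_true (c v) with hcv | hcv
    · have hSeq : S = univ.filter (fun w => ¬ (c w = true)) := by
        ext w
        simp only [hSdef, mem_filter, mem_univ, true_and, hcv]
      have hsum := card_filter_add_card_filter_not
        (s := (univ : Finset V)) (p := fun w => c w = true)
      rw [hprof', card_univ] at hsum
      rw [hSeq]
      omega
    · have hSeq : S = univ.filter (fun w => c w = true) := by
        ext w
        simp only [hSdef, mem_filter, mem_univ, true_and, hcv, Bool.ne_false_iff]
      rw [hSeq, hprof']
  omega

end Aux

/-- On a `δ`-regular graph with `Λ < 1/δ`, every swap equilibrium `σ`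
satisfies `DoI(σ) ≥ 2b`; consequently, for every swap equilibrium `σ` and every
strategy profile `σ*`, `DoI(σ*)/DoI(σ) ≤ min {(δ+1)/2, n/(2b)}`. -/
theorem price_of_anarchy_regular_graphs
    {V : Type*} [Fintype V] [DecidableEq V] (G : SimpleGraph V) (b : ℕ) (Λ : ℝ) (p : ℝ → ℝ)
    (δ : ℕ) (hreg : ∀ v, deg G v = δ)
    (hgame : IsGame G b Λ p) (hΛ : Λ < 1 / (δ : ℝ)) :
    (∀ c : V → Bool, IsProfile c b → IsSwapEquilibrium G p c → 2 * b ≤ DoI G c) ∧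
    (∀ c cstar : V → Bool, IsProfile c b → IsProfile cstar b → IsSwapEquilibrium G p c →
        (DoI G cstar : ℝ) / (DoI G c : ℝ) ≤
          min (((δ : ℝ) + 1) / 2) ((Fintype.card V : ℝ) / (2 * (b : ℝ)))) := by
  classical
  have hb1 := hgame.one_le_b
  have part1 : ∀ c : V → Bool, IsProfile c b → IsSwapEquilibrium G p c → 2 * b ≤ DoI G c :=
    fun c hc hse => doi_lower hreg hgame hΛ c hc hse
  refine ⟨part1, ?_⟩
  intro c cstar hc hcs hse
  have h2b := part1 c hc hse
  have hDn : DoI G cstar ≤ Fintype.card V := by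
    classical
    rw [DoI]
    exact (card_filter_le _ _).trans (le_of_eq card_univ)
  have hcs' : (univ.filter (fun x => cstar x = true)).card = b := hcs
  have hDb : DoI G cstar ≤ b * (δ + 1) := by
    classical
    have hsub : univ.filter (fun x => frac G cstar x ≠ 1) ⊆
        (univ.filter (fun x => cstar x = true)) ∪
        ((univ.filter (fun u => cstar u = true)).biUnion
          (fun u => univ.filter (fun x => G.Adj u x))) := by
      intro x hx
      have hx' := (mem_filter.1 hx).2
      by_cases hcx : cstar x = true
      · exact mem_union_left _ (mem_filter.2 ⟨mem_univ x, hcx⟩)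
      · apply mem_union_right
        have hne : ¬ ∀ u, G.Adj x u → cstar u = cstar x :=
          fun h => hx' (frac_eq_one_iff.2 h)
        push_neg at hne
        obtain ⟨u, hadj, hcu⟩ := hne
        have hcu' : cstar u = true := by
          rcases Bool.eq_false_or_eq_true (cstar u) with h | h <;>
            rcases Bool.eq_false_or_eq_true (cstar x) with h' | h' <;> simp_all
        exact mem_biUnion.2 ⟨u, mem_filter.2 ⟨mem_univ u, hcu'⟩,
          mem_filter.2 ⟨mem_univ x, hadj.symm⟩⟩
    calc DoI G cstar
        ≤ ((univ.filter (fun x => cstar x = true)) ∪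
            ((univ.filter (fun u => cstar u = true)).biUnion
              (fun u => univ.filter (fun x => G.Adj u x)))).card := card_le_card hsub
      _ ≤ b + b * δ := by
          apply (card_union_le _ _).trans
          apply Nat.add_le_add
          · exact le_of_eq hcs'
          · apply card_biUnion_le.trans
            have hterm : ∀ u ∈ univ.filter (fun u => cstar u = true),
                (univ.filter (fun x => G.Adj u x)).card = δ := fun u _ => hreg u
            rw [Finset.sum_congr rfl hterm, Finset.sum_const, hcs', smul_eq_mul]
      _ = b * (δ + 1) := by ring
  have hbR : (1:ℝ) ≤ (b:ℝ) := by exact_mod_cast hb1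
  have hb0 : (0:ℝ) < 2 * (b:ℝ) := by linarith
  have hDc : (2 * (b:ℝ)) ≤ (DoI G c : ℝ) := by exact_mod_cast h2b
  apply le_min
  · have h1 : (DoI G cstar : ℝ) / (DoI G c : ℝ)
        ≤ ((b * (δ + 1) : ℕ) : ℝ) / (2 * (b:ℝ)) :=
      div_le_div₀ (by positivity) (by exact_mod_cast hDb) hb0 hDc
    apply h1.trans (le_of_eq ?_)
    have hbne : (b:ℝ) ≠ 0 := by linarith
    push_cast
    field_simp
  · exact div_le_div₀ (by positivity) (by exact_mod_cast hDn) hb0 hDc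


end SwapSchelling
end

section
/- For every ε > 0: (i) there exists a swap Schelling game (G,b,1/2) on a cycle graph G, a swap equilibrium σ, and a strategy profile σ* with DoI(σ*)/DoI(σ) > 2 − ε; and (ii) for every peak Λ < 1/2 there exists a swap Schelling game (G,b,Λ) on a cycle graph G, a swap equilibrium σ, and a strategy profile σ* with DoI(σ*)/DoI(σ) > 3/2 − ε. -/
open Finset

namespace SwapSchelling

variable {V : Type*} [Fintype V] [DecidableEq V]

/-! ### Auxiliary lemmas -/

section Aux

lemma val_one2 {n : ℕ} [NeZero n] (hn : 2 ≤ n) : (1 : Fin n).val = 1 := by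
  rw [Fin.val_one' n]; exact Nat.mod_eq_of_lt hn

lemma val_add_one {n : ℕ} [NeZero n] (v : Fin n) (h : v.val + 1 < n) :
    (v + 1).val = v.val + 1 := by
  rw [Fin.add_def]
  simp only [val_one2 (show 2 ≤ n by omega)]
  exact Nat.mod_eq_of_lt h

lemma val_add_one_last {n : ℕ} [NeZero n] (v : Fin n) (hn : 2 ≤ n) (h : v.val + 1 = n) :
    (v + 1).val = 0 := by
  rw [Fin.add_def]
  simp only [val_one2 hn, h, Nat.mod_self]

lemma val_sub_one {n : ℕ} [NeZero n] (v : Fin n) (h : 0 < v.val) : (v - 1).val = v.val - 1 := by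
  have hn : 2 ≤ n := by have := v.isLt; omega
  rw [Fin.sub_def]
  simp only [val_one2 hn]
  have hv := v.isLt
  have h2 : n - 1 + v.val = (v.val - 1) + n := by omega
  simp only [h2, Nat.add_mod_right, Nat.mod_eq_of_lt (show v.val - 1 < n by omega)]

lemma val_sub_one_zero {n : ℕ} [NeZero n] (v : Fin n) (hn : 2 ≤ n) (h : v.val = 0) :
    (v - 1).val = n - 1 := by
  rw [Fin.sub_def]
  simp only [val_one2 hn, h, Nat.add_zero, Nat.mod_eq_of_lt (show n - 1 < n by omega)]

lemma cycle_adj {n : ℕ} [NeZero n] (hn : 3 ≤ n) {u v : Fin n} :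
    (SimpleGraph.cycleGraph n).Adj v u ↔ u = v - 1 ∨ u = v + 1 := by
  obtain ⟨m, rfl⟩ : ∃ m, n = m + 2 := ⟨n - 2, by omega⟩
  letI := Fin.instCommRing (m + 2)
  rw [SimpleGraph.cycleGraph_adj]
  constructor
  · rintro (h | h)
    · left; linear_combination -h
    · right; linear_combination h
  · rintro (rfl | rfl)
    · left; ring
    · right; ring

lemma closedNbhd_cycle {n : ℕ} [NeZero n] (hn : 3 ≤ n) (v : Fin n) :
    closedNbhd (SimpleGraph.cycleGraph n) v = {v - 1, v, v + 1} := by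
  ext u
  simp only [closedNbhd, mem_filter, mem_univ, true_and, mem_insert, mem_singleton,
    cycle_adj hn]
  tauto

lemma sub_one_ne_self {n : ℕ} [NeZero n] (hn : 3 ≤ n) (v : Fin n) : v - 1 ≠ v := by
  intro h
  have h2 : (v - 1).val = v.val := by rw [h]
  rcases Nat.eq_zero_or_pos v.val with h0 | h0
  · rw [val_sub_one_zero v (by omega) h0] at h2; omega
  · rw [val_sub_one v h0] at h2; omega

lemma add_one_ne_self {n : ℕ} [NeZero n] (hn : 3 ≤ n) (v : Fin n) : v + 1 ≠ v := by
  intro h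
  have h2 : (v + 1).val = v.val := by rw [h]
  have hv := v.isLt
  rcases Nat.lt_or_ge (v.val + 1) n with h0 | h0
  · rw [val_add_one v h0] at h2; omega
  · rw [val_add_one_last v (by omega) (by omega)] at h2; omega

lemma sub_one_ne_add_one {n : ℕ} [NeZero n] (hn : 3 ≤ n) (v : Fin n) : v - 1 ≠ v + 1 := by
  intro h
  have hv := v.isLt
  have h2 : (v - 1).val = (v + 1).val := by rw [h]
  rcases Nat.eq_zero_or_pos v.val with h0 | h0
  · rw [val_sub_one_zero v (by omega) h0, val_add_one v (by omega)] at h2; omega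
  · rcases Nat.lt_or_ge (v.val + 1) n with h1 | h1
    · rw [val_sub_one v h0, val_add_one v h1] at h2; omega
    · rw [val_sub_one v h0, val_add_one_last v (by omega) (by omega)] at h2; omega

lemma card_triple {n : ℕ} [NeZero n] (hn : 3 ≤ n) (v : Fin n) :
    ({v - 1, v, v + 1} : Finset (Fin n)).card = 3 := by
  rw [card_insert_of_notMem (by simp [sub_one_ne_self hn, sub_one_ne_add_one hn]),
    card_insert_of_notMem (by simp [(add_one_ne_self hn v).symm]), card_singleton]

lemma card_closedNbhd_s14 {n : ℕ} [NeZero n] (hn : 3 ≤ n) (v : Fin n) :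
    (closedNbhd (SimpleGraph.cycleGraph n) v).card = 3 := by
  rw [closedNbhd_cycle hn]; exact card_triple hn v

lemma deg_cycle {n : ℕ} [NeZero n] (hn : 3 ≤ n) (v : Fin n) :
    deg (SimpleGraph.cycleGraph n) v = 2 := by
  rw [deg, card_eq_two]
  exact ⟨v - 1, v + 1, sub_one_ne_add_one hn v, by ext u; simp [cycle_adj hn]⟩

lemma cycle_connected {n : ℕ} (hn : 1 ≤ n) : (SimpleGraph.cycleGraph n).Connected := by
  obtain ⟨m, rfl⟩ : ∃ m, n = m + 1 := ⟨n - 1, by omega⟩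
  exact SimpleGraph.cycleGraph_connected

/-! ### frac on cycles -/

lemma frac_cycle {n : ℕ} [NeZero n] (hn : 3 ≤ n) (c : Fin n → Bool) (v : Fin n) :
    frac (SimpleGraph.cycleGraph n) c v
      = ((({v - 1, v, v + 1} : Finset (Fin n)).filter (fun u => c u = c v)).card : ℝ) / 3 := by
  rw [frac, card_closedNbhd_s14 hn, closedNbhd_cycle hn]
  norm_num

lemma frac_mem {n : ℕ} [NeZero n] (hn : 3 ≤ n) (c : Fin n → Bool) (v : Fin n) :
    frac (SimpleGraph.cycleGraph n) c v = 1/3 ∨ frac (SimpleGraph.cycleGraph n) c v = 2/3 ∨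
      frac (SimpleGraph.cycleGraph n) c v = 1 := by
  rw [frac_cycle hn]
  set k := (({v - 1, v, v + 1} : Finset (Fin n)).filter (fun u => c u = c v)).card with hk
  have hk1 : 1 ≤ k := card_pos.mpr ⟨v, mem_filter.mpr ⟨by simp, rfl⟩⟩
  have hk3 : k ≤ 3 := (card_filter_le _ _).trans_eq (card_triple hn v)
  have : k = 1 ∨ k = 2 ∨ k = 3 := by omega
  rcases this with h | h | h <;> rw [h] <;> norm_num

lemma frac_eq_one_of {n : ℕ} [NeZero n] (hn : 3 ≤ n) (c : Fin n → Bool) (v : Fin n)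
    (h1 : c (v - 1) = c v) (h2 : c (v + 1) = c v) :
    frac (SimpleGraph.cycleGraph n) c v = 1 := by
  rw [frac_cycle hn, filter_true_of_mem, card_triple hn v]
  · norm_num
  · intro u hu
    simp only [mem_insert, mem_singleton] at hu
    rcases hu with rfl | rfl | rfl
    · exact h1
    · rfl
    · exact h2

lemma frac_ne_one_of {n : ℕ} [NeZero n] (hn : 3 ≤ n) (c : Fin n → Bool) (v : Fin n)
    (h : c (v - 1) ≠ c v ∨ c (v + 1) ≠ c v) :
    frac (SimpleGraph.cycleGraph n) c v ≠ 1 := by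
  rw [frac_cycle hn]
  obtain ⟨u, hu, hcu⟩ : ∃ u, u ∈ ({v - 1, v, v + 1} : Finset (Fin n)) ∧ c u ≠ c v := by
    rcases h with h | h
    · exact ⟨v - 1, by simp, h⟩
    · exact ⟨v + 1, by simp, h⟩
  have hlt : (({v - 1, v, v + 1} : Finset (Fin n)).filter (fun u => c u = c v)).card < 3 := by
    rw [← card_triple hn v]
    refine card_lt_card ?_
    rw [Finset.ssubset_iff_of_subset (filter_subset _ _)]
    exact ⟨u, hu, fun hmem => hcu (mem_filter.mp hmem).2⟩
  intro hcon
  rw [div_eq_one_iff_eq (by norm_num)] at hcon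
  have : (({v - 1, v, v + 1} : Finset (Fin n)).filter (fun u => c u = c v)).card = 3 := by
    exact_mod_cast hcon
  omega

lemma frac_third_of {n : ℕ} [NeZero n] (hn : 3 ≤ n) (c : Fin n → Bool) (v : Fin n)
    (h1 : c (v - 1) ≠ c v) (h2 : c (v + 1) ≠ c v) :
    frac (SimpleGraph.cycleGraph n) c v = 1/3 := by
  rw [frac_cycle hn]
  have : (({v - 1, v, v + 1} : Finset (Fin n)).filter (fun u => c u = c v)) = {v} := by
    ext u
    simp only [mem_filter, mem_insert, mem_singleton]
    constructor
    · rintro ⟨rfl | rfl | rfl, hc⟩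
      · exact absurd hc h1
      · rfl
      · exact absurd hc h2
    · rintro rfl
      exact ⟨by simp, rfl⟩
  rw [this, card_singleton]
  norm_num

end Aux

section Peak

variable {p : ℝ → ℝ} {Λ : ℝ}

lemma p_one_eq_zero (hp : IsSinglePeaked p Λ) : p 1 = 0 := by
  have h := hp.symm 1 ⟨hp.peak_mem.2.le, le_refl 1⟩
  simpa [hp.map_zero] using h

lemma p_third_pos (hp : IsSinglePeaked p Λ) : 0 < p (1/3) := by
  have h0 := hp.peak_mem.1
  have h1 := hp.peak_mem.2
  have h1Λ : 0 < 1 - Λ := by linarith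
  by_cases hc : 1/3 ≤ Λ
  · have := hp.strictMonoOn ⟨le_refl 0, h0.le⟩ ⟨by norm_num, hc⟩ (by norm_num)
    rwa [hp.map_zero] at this
  · push_neg at hc
    have hsym := hp.symm (1/3) ⟨hc.le, by norm_num⟩
    have hr0 : 0 < Λ * (1 - 1/3) / (1 - Λ) := by positivity
    have hrΛ : Λ * (1 - 1/3) / (1 - Λ) ≤ Λ := by
      rw [div_le_iff₀ h1Λ]
      nlinarith
    have := hp.strictMonoOn ⟨le_refl 0, h0.le⟩ ⟨hr0.le, hrΛ⟩ hr0
    rw [hp.map_zero] at this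
    linarith [this, hsym.ge, hsym.le]

lemma p_twothirds_le (hp : IsSinglePeaked p Λ) (hΛ : Λ ≤ 1/2) : p (2/3) ≤ p (1/3) := by
  have h0 := hp.peak_mem.1
  have h1 := hp.peak_mem.2
  have h1Λ : 0 < 1 - Λ := by linarith
  have hsym2 := hp.symm (2/3) ⟨by linarith, by norm_num⟩
  set q := Λ * (1 - 2/3) / (1 - Λ) with hq
  have hq0 : 0 ≤ q := by positivity
  by_cases hc : 1/3 ≤ Λ
  · have hq13 : q ≤ 1/3 := by
      rw [hq, div_le_iff₀ h1Λ]
      nlinarith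
    have := hp.strictMonoOn.monotoneOn ⟨hq0, hq13.trans hc⟩ ⟨by norm_num, hc⟩ hq13
    linarith [hsym2]
  · push_neg at hc
    have hsym1 := hp.symm (1/3) ⟨hc.le, by norm_num⟩
    set r := Λ * (1 - 1/3) / (1 - Λ) with hr
    have hr0 : 0 ≤ r := by positivity
    have hrΛ : r ≤ Λ := by
      rw [hr, div_le_iff₀ h1Λ]
      nlinarith
    have hqr : q ≤ r := by
      rw [hq, hr]
      gcongr <;> nlinarith
    have := hp.strictMonoOn.monotoneOn ⟨hq0, hqr.trans hrΛ⟩ ⟨hr0, hrΛ⟩ hqr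
    linarith [hsym1, hsym2]

lemma p_le_third (hp : IsSinglePeaked p Λ) (hΛ : Λ ≤ 1/2) {x : ℝ}
    (hx : x = 1/3 ∨ x = 2/3 ∨ x = 1) : p x ≤ p (1/3) := by
  rcases hx with rfl | rfl | rfl
  · exact le_refl _
  · exact p_twothirds_le hp hΛ
  · rw [p_one_eq_zero hp]
    exact (p_third_pos hp).le

lemma p_twothirds_eq (hp : IsSinglePeaked p (1/2)) : p (2/3) = p (1/3) := by
  have h := hp.symm (2/3) ⟨by norm_num, by norm_num⟩
  have harg : (1:ℝ)/2 * (1 - 2/3) / (1 - 1/2) = 1/3 := by norm_num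
  rwa [harg] at h

end Peak

section SE

lemma isSE_of_max {n : ℕ} [NeZero n] (hn : 3 ≤ n) {Λ : ℝ} {p : ℝ → ℝ}
    (hp : IsSinglePeaked p Λ) (hΛ : Λ ≤ 1/2) (c : Fin n → Bool)
    (hmax : ∀ v, c v = true → p (1/3) ≤ p (frac (SimpleGraph.cycleGraph n) c v)) :
    IsSwapEquilibrium (SimpleGraph.cycleGraph n) p c := by
  rintro v w ⟨hne, h1, h2⟩
  cases hcv : c v with
  | true =>
    have hb := hmax v hcv
    have hx := p_le_third hp hΛ (frac_mem hn (swapColor c v w) w)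
    linarith
  | false =>
    have hcw : c w = true := by
      cases hcw2 : c w with
      | true => rfl
      | false => exact absurd (hcv.trans hcw2.symm) hne
    have hb := hmax w hcw
    have hx := p_le_third hp hΛ (frac_mem hn (swapColor c v w) v)
    linarith

end SE

section DoIAux

variable {V : Type*} [Fintype V] [DecidableEq V]

open scoped Classical in
lemma DoI_eq_card {G : SimpleGraph V} {c : V → Bool}
    (h : ∀ v, frac G c v ≠ 1) : DoI G c = Fintype.card V := by
  rw [DoI, filter_true_of_mem (fun v _ => h v), card_univ]

open scoped Classical in
lemma DoI_le_of {G : SimpleGraph V} {c : V → Bool} (S : Finset V)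
    (hS : ∀ v ∈ S, frac G c v = 1) : DoI G c ≤ Fintype.card V - S.card := by
  classical
  rw [DoI]
  have hd : Disjoint S (univ.filter (fun v => frac G c v ≠ 1)) := by
    rw [Finset.disjoint_left]
    intro v hv hvf
    exact (mem_filter.mp hvf).2 (hS v hv)
  have := card_le_card (Finset.subset_univ (S ∪ univ.filter (fun v => frac G c v ≠ 1)))
  rw [card_union_of_disjoint hd, card_univ] at this
  omega

open scoped Classical in
lemma one_le_DoI {G : SimpleGraph V} {c : V → Bool} (v : V)
    (h : frac G c v ≠ 1) : 1 ≤ DoI G c := by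
  rw [DoI]
  exact card_pos.mpr ⟨v, mem_filter.mpr ⟨mem_univ v, h⟩⟩

end DoIAux

section Counting

lemma filter_range_succ_card (P : ℕ → Prop) [DecidablePred P] (n : ℕ) :
    ((range (n+1)).filter P).card
      = ((range n).filter P).card + (if P n then 1 else 0) := by
  rw [range_add_one, filter_insert]
  by_cases h : P n
  · rw [if_pos h, if_pos h, card_insert_of_notMem (by simp)]
  · rw [if_neg h, if_neg h, add_zero]

lemma count_mod3_eq0 (t : ℕ) : ((range (3*t)).filter (fun k => k % 3 = 0)).card = t := by
  induction t with
  | zero => simp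
  | succ t ih =>
    have h1 : 3*(t+1) = (3*t) + 1 + 1 + 1 := by ring
    simp only [h1, filter_range_succ_card, ih]
    rw [if_pos (show 3*t % 3 = 0 by omega), if_neg (show ¬(3*t+1) % 3 = 0 by omega),
      if_neg (show ¬(3*t+1+1) % 3 = 0 by omega)]
    all_goals omega

lemma count_mod3_ne2 (t : ℕ) : ((range (3*t)).filter (fun k => ¬ k % 3 = 2)).card = 2*t := by
  induction t with
  | zero => simp
  | succ t ih =>
    have h1 : 3*(t+1) = (3*t) + 1 + 1 + 1 := by ring
    simp only [h1, filter_range_succ_card, ih]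
    rw [if_pos (show ¬3*t % 3 = 2 by omega), if_pos (show ¬(3*t+1) % 3 = 2 by omega),
      if_neg (show ¬¬(3*t+1+1) % 3 = 2 by omega)]
    omega

lemma count_mod2_eq0 (b : ℕ) : ((range (2*b)).filter (fun k => k % 2 = 0)).card = b := by
  induction b with
  | zero => simp
  | succ b ih =>
    have h1 : 2*(b+1) = (2*b) + 1 + 1 := by ring
    simp only [h1, filter_range_succ_card, ih]
    rw [if_pos (show 2*b % 2 = 0 by omega), if_neg (show ¬(2*b+1) % 2 = 0 by omega)]
    all_goals omega

open scoped Classical in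
lemma card_filter_val (n : ℕ) (P : ℕ → Prop) :
    ((univ : Finset (Fin n)).filter (fun v => P v.val)).card
      = ((range n).filter P).card := by
  classical
  apply card_bij (fun (v : Fin n) _ => v.val)
  · intro v hv
    simp only [mem_filter, mem_univ, true_and] at hv
    simp only [mem_filter, mem_range]
    exact ⟨v.isLt, hv⟩
  · intro a _ b _ h
    exact Fin.val_injective h
  · intro k hk
    simp only [mem_filter, mem_range] at hk
    exact ⟨⟨k, hk.1⟩, by simp [hk.2], rfl⟩

end Counting

section MoreAux

lemma card_filter_val' {n : ℕ} {P : Fin n → Prop} {Q : ℕ → Prop}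
    [DecidablePred P] [DecidablePred Q] (h : ∀ v : Fin n, P v ↔ Q v.val) :
    ((univ : Finset (Fin n)).filter P).card = ((range n).filter Q).card := by
  apply card_bij (fun (v : Fin n) _ => v.val)
  · intro v hv
    simp only [mem_filter, mem_univ, true_and] at hv
    simp only [mem_filter, mem_range]
    exact ⟨v.isLt, (h v).mp hv⟩
  · intro a _ b _ hab
    exact Fin.val_injective hab
  · intro k hk
    simp only [mem_filter, mem_range] at hk
    exact ⟨⟨k, hk.1⟩, mem_filter.mpr ⟨mem_univ _, (h ⟨k, hk.1⟩).mpr hk.2⟩, rfl⟩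

lemma star_frac_ne_one {n : ℕ} [NeZero n] (hn : 3 ≤ n) (h3 : n % 3 = 0) (v : Fin n) :
    frac (SimpleGraph.cycleGraph n) (fun u => decide (u.val % 3 = 0)) v ≠ 1 := by
  have hv := v.isLt
  have hcase : v.val % 3 = 0 ∨ v.val % 3 = 1 ∨ v.val % 3 = 2 := by omega
  rcases hcase with hc | hc | hc
  · apply frac_ne_one_of hn
    right
    simp only [ne_eq, decide_eq_decide]
    rw [val_add_one v (by omega)]
    omega
  · apply frac_ne_one_of hn
    left
    simp only [ne_eq, decide_eq_decide]
    rw [val_sub_one v (by omega)]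
    omega
  · apply frac_ne_one_of hn
    right
    simp only [ne_eq, decide_eq_decide]
    rcases Nat.lt_or_ge (v.val + 1) n with hlt | hge
    · rw [val_add_one v hlt]; omega
    · rw [val_add_one_last v (by omega) (by omega)]; omega

end MoreAux
/-- For every `ε > 0`: (i) there is a game on a ring (a connected
`2`-regular graph) with peak `1/2`, a swap equilibrium `σ` and a profile `σ*` with
`DoI(σ*)/DoI(σ) > 2 - ε`; (ii) for every peak `Λ < 1/2` there is such a game with
`DoI(σ*)/DoI(σ) > 3/2 - ε`. -/
theorem price_of_anarchy_lower_bound_rings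
    (ε : ℝ) (hε : 0 < ε) :
    (∀ p : ℝ → ℝ, IsSinglePeaked p (1 / 2) →
      ∃ (n : ℕ) (G : SimpleGraph (Fin n)) (b : ℕ),
        IsGame G b (1 / 2) p ∧ (∀ v, deg G v = 2) ∧
        ∃ c cstar : Fin n → Bool, IsProfile c b ∧ IsProfile cstar b ∧
          IsSwapEquilibrium G p c ∧
          2 - ε < (DoI G cstar : ℝ) / (DoI G c : ℝ)) ∧
    (∀ Λ : ℝ, Λ < 1 / 2 → ∀ p : ℝ → ℝ, IsSinglePeaked p Λ →
      ∃ (n : ℕ) (G : SimpleGraph (Fin n)) (b : ℕ),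
        IsGame G b Λ p ∧ (∀ v, deg G v = 2) ∧
        ∃ c cstar : Fin n → Bool, IsProfile c b ∧ IsProfile cstar b ∧
          IsSwapEquilibrium G p c ∧
          3 / 2 - ε < (DoI G cstar : ℝ) / (DoI G c : ℝ)) := by
  constructor
  · -- Part (i): Λ = 1/2
    intro p hp
    set t : ℕ := ⌈2/ε⌉₊ + 1 with ht
    haveI : NeZero (6*t) := ⟨by omega⟩
    have hn : 3 ≤ 6*t := by omega
    refine ⟨6*t, SimpleGraph.cycleGraph (6*t), 2*t, ?_, fun v => deg_cycle hn v, ?_⟩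
    · exact ⟨cycle_connected (by omega), by omega, by simp only [Fintype.card_fin]; omega, hp⟩
    · set c : Fin (6*t) → Bool := fun v => decide (v.val < 3*t ∧ ¬ v.val % 3 = 2) with hc
      set cstar : Fin (6*t) → Bool := fun v => decide (v.val % 3 = 0) with hcs
      have hprof : IsProfile c (2*t) := by
        show (univ.filter (fun v => c v = true)).card = 2*t
        rw [card_filter_val' (Q := fun k => k < 3*t ∧ ¬ k % 3 = 2) (fun v => by simp [hc])]
        rw [show (range (6*t)).filter (fun k => k < 3*t ∧ ¬ k % 3 = 2)
            = (range (3*t)).filter (fun k => ¬ k % 3 = 2) by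
          ext k; simp only [mem_filter, mem_range]; omega]
        exact count_mod3_ne2 t
      have hprofstar : IsProfile cstar (2*t) := by
        show (univ.filter (fun v => cstar v = true)).card = 2*t
        rw [card_filter_val' (Q := fun k => k % 3 = 0) (fun v => by simp [hcs])]
        rw [show (6:ℕ)*t = 3*(2*t) by ring]
        exact count_mod3_eq0 (2*t)
      have hSE : IsSwapEquilibrium (SimpleGraph.cycleGraph (6*t)) p c := by
        apply isSE_of_max hn hp (le_refl _)
        intro v hv
        simp only [hc, decide_eq_true_eq] at hv
        obtain ⟨hv1, hv2⟩ := hv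
        have hredN : c (v-1) ≠ c v ∨ c (v+1) ≠ c v := by
          have h3 : v.val % 3 = 0 ∨ v.val % 3 = 1 := by omega
          rcases h3 with h3 | h3
          · left
            simp only [hc, ne_eq, decide_eq_decide]
            rcases Nat.eq_zero_or_pos v.val with h0 | h0
            · rw [val_sub_one_zero v (by omega) h0]; omega
            · rw [val_sub_one v h0]; omega
          · right
            simp only [hc, ne_eq, decide_eq_decide]
            rw [val_add_one v (by omega)]; omega
        have hne1 := frac_ne_one_of hn c v hredN
        rcases frac_mem hn c v with hf | hf | hf
        · rw [hf]
        · rw [hf, p_twothirds_eq hp]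
        · exact absurd hf hne1
      have hstar : DoI (SimpleGraph.cycleGraph (6*t)) cstar = 6*t := by
        rw [DoI_eq_card (fun v => star_frac_ne_one hn (by omega) v), Fintype.card_fin]
      have hle : DoI (SimpleGraph.cycleGraph (6*t)) c ≤ 3*t+1 := by
        have hS : ∀ v ∈ univ.filter (fun v : Fin (6*t) => 3*t ≤ v.val ∧ v.val ≤ 6*t-2),
            frac (SimpleGraph.cycleGraph (6*t)) c v = 1 := by
          intro v hv
          have hv2 := (mem_filter.mp hv).2
          have hvlt := v.isLt
          apply frac_eq_one_of hn
          · simp only [hc, decide_eq_decide]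
            rw [val_sub_one v (by omega)]; omega
          · simp only [hc, decide_eq_decide]
            rw [val_add_one v (by omega)]; omega
        have hcard : (univ.filter (fun v : Fin (6*t) => 3*t ≤ v.val ∧ v.val ≤ 6*t-2)).card
            = 3*t - 1 := by
          rw [card_filter_val' (Q := fun k => 3*t ≤ k ∧ k ≤ 6*t-2) (fun v => Iff.rfl)]
          rw [show (range (6*t)).filter (fun k => 3*t ≤ k ∧ k ≤ 6*t-2) = Ico (3*t) (6*t-1) by
            ext k; simp only [mem_filter, mem_range, mem_Ico]; omega]
          rw [Nat.card_Ico]; omega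
        have := DoI_le_of _ hS
        rw [hcard, Fintype.card_fin] at this
        omega
      have hpos : 1 ≤ DoI (SimpleGraph.cycleGraph (6*t)) c := by
        apply one_le_DoI (⟨0, by omega⟩ : Fin (6*t))
        apply frac_ne_one_of hn
        left
        simp only [hc, ne_eq, decide_eq_decide]
        rw [val_sub_one_zero _ (by omega) rfl]
        omega
      refine ⟨c, cstar, hprof, hprofstar, hSE, ?_⟩
      rw [hstar]
      have hD0 : (0:ℝ) < (DoI (SimpleGraph.cycleGraph (6*t)) c : ℝ) := by exact_mod_cast hpos
      have hDle : ((DoI (SimpleGraph.cycleGraph (6*t)) c : ℝ)) ≤ 3*(t:ℝ)+1 := by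
        exact_mod_cast hle
      have htceil : (2/ε : ℝ) < t := by
        have h1 := Nat.le_ceil (2/ε)
        have h2 : ((⌈2/ε⌉₊ : ℕ) : ℝ) < t := by
          rw [ht]; push_cast; linarith
        linarith
      have ht2 : 2 < ε * t := by
        rw [div_lt_iff₀ hε] at htceil
        linarith [htceil]
      have ht0 : (0:ℝ) ≤ (t:ℝ) := by positivity
      calc 2 - ε < (6*(t:ℝ))/(3*(t:ℝ)+1) := by
            rw [lt_div_iff₀ (by positivity)]
            nlinarith
        _ ≤ (6*(t:ℝ))/(DoI (SimpleGraph.cycleGraph (6*t)) c : ℝ) := by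
            gcongr
        _ = ((6*t : ℕ) : ℝ)/(DoI (SimpleGraph.cycleGraph (6*t)) c : ℝ) := by push_cast; ring_nf
  · -- Part (ii): Λ < 1/2
    intro Λ hΛ p hp
    have hΛle : Λ ≤ 1/2 := hΛ.le
    set b : ℕ := ⌈3/ε⌉₊ + 1 with hb
    haveI : NeZero (3*b) := ⟨by omega⟩
    have hn : 3 ≤ 3*b := by omega
    refine ⟨3*b, SimpleGraph.cycleGraph (3*b), b, ?_, fun v => deg_cycle hn v, ?_⟩
    · exact ⟨cycle_connected (by omega), by omega, by simp only [Fintype.card_fin]; omega, hp⟩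
    · set c : Fin (3*b) → Bool := fun v => decide (v.val < 2*b ∧ v.val % 2 = 0) with hc
      set cstar : Fin (3*b) → Bool := fun v => decide (v.val % 3 = 0) with hcs
      have hprof : IsProfile c b := by
        show (univ.filter (fun v => c v = true)).card = b
        rw [card_filter_val' (Q := fun k => k < 2*b ∧ k % 2 = 0) (fun v => by simp [hc])]
        rw [show (range (3*b)).filter (fun k => k < 2*b ∧ k % 2 = 0)
            = (range (2*b)).filter (fun k => k % 2 = 0) by
          ext k; simp only [mem_filter, mem_range]; omega]
        exact count_mod2_eq0 b
      have hprofstar : IsProfile cstar b := by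
        show (univ.filter (fun v => cstar v = true)).card = b
        rw [card_filter_val' (Q := fun k => k % 3 = 0) (fun v => by simp [hcs])]
        exact count_mod3_eq0 b
      have hSE : IsSwapEquilibrium (SimpleGraph.cycleGraph (3*b)) p c := by
        apply isSE_of_max hn hp hΛle
        intro v hv
        simp only [hc, decide_eq_true_eq] at hv
        obtain ⟨hv1, hv2⟩ := hv
        have h1 : c (v-1) ≠ c v := by
          simp only [hc, ne_eq, decide_eq_decide]
          rcases Nat.eq_zero_or_pos v.val with h0 | h0
          · rw [val_sub_one_zero v (by omega) h0]; omega
          · rw [val_sub_one v h0]; omega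
        have h2 : c (v+1) ≠ c v := by
          simp only [hc, ne_eq, decide_eq_decide]
          rw [val_add_one v (by omega)]; omega
        rw [frac_third_of hn c v h1 h2]
      have hstar : DoI (SimpleGraph.cycleGraph (3*b)) cstar = 3*b := by
        rw [DoI_eq_card (fun v => star_frac_ne_one hn (by omega) v), Fintype.card_fin]
      have hle : DoI (SimpleGraph.cycleGraph (3*b)) c ≤ 2*b+1 := by
        have hS : ∀ v ∈ univ.filter (fun v : Fin (3*b) => 2*b ≤ v.val ∧ v.val ≤ 3*b-2),
            frac (SimpleGraph.cycleGraph (3*b)) c v = 1 := by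
          intro v hv
          have hv2 := (mem_filter.mp hv).2
          have hvlt := v.isLt
          apply frac_eq_one_of hn
          · simp only [hc, decide_eq_decide]
            rw [val_sub_one v (by omega)]; omega
          · simp only [hc, decide_eq_decide]
            rw [val_add_one v (by omega)]; omega
        have hcard : (univ.filter (fun v : Fin (3*b) => 2*b ≤ v.val ∧ v.val ≤ 3*b-2)).card
            = b - 1 := by
          rw [card_filter_val' (Q := fun k => 2*b ≤ k ∧ k ≤ 3*b-2) (fun v => Iff.rfl)]
          rw [show (range (3*b)).filter (fun k => 2*b ≤ k ∧ k ≤ 3*b-2) = Ico (2*b) (3*b-1) by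
            ext k; simp only [mem_filter, mem_range, mem_Ico]; omega]
          rw [Nat.card_Ico]; omega
        have := DoI_le_of _ hS
        rw [hcard, Fintype.card_fin] at this
        omega
      have hpos : 1 ≤ DoI (SimpleGraph.cycleGraph (3*b)) c := by
        apply one_le_DoI (⟨0, by omega⟩ : Fin (3*b))
        apply frac_ne_one_of hn
        left
        simp only [hc, ne_eq, decide_eq_decide]
        rw [val_sub_one_zero _ (by omega) rfl]
        simp only [and_true, true_and]
        omega
      refine ⟨c, cstar, hprof, hprofstar, hSE, ?_⟩
      rw [hstar]
      have hD0 : (0:ℝ) < (DoI (SimpleGraph.cycleGraph (3*b)) c : ℝ) := by exact_mod_cast hpos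
      have hDle : ((DoI (SimpleGraph.cycleGraph (3*b)) c : ℝ)) ≤ 2*(b:ℝ)+1 := by
        exact_mod_cast hle
      have hbceil : (3/ε : ℝ) < b := by
        have h1 := Nat.le_ceil (3/ε)
        have h2 : ((⌈3/ε⌉₊ : ℕ) : ℝ) < b := by
          rw [hb]; push_cast; linarith
        linarith
      have hb2 : 3 < ε * b := by
        rw [div_lt_iff₀ hε] at hbceil
        linarith [hbceil]
      have hb0 : (0:ℝ) ≤ (b:ℝ) := by positivity
      calc 3/2 - ε < (3*(b:ℝ))/(2*(b:ℝ)+1) := by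
            rw [lt_div_iff₀ (by positivity)]
            nlinarith
        _ ≤ (3*(b:ℝ))/(DoI (SimpleGraph.cycleGraph (3*b)) c : ℝ) := by
            gcongr
        _ = ((3*b : ℕ) : ℝ)/(DoI (SimpleGraph.cycleGraph (3*b)) c : ℝ) := by push_cast; ring_nf

end SwapSchelling
end

section
/- Let G be a finite simple graph, let k ≥ 1 be an integer, and let U be a subset of the vertices of G with |U| ≥ 2. Then there exists a partition {V_1, …, V_k} of U that is balanced, i.e., |V_t| ≥ ⌊|U|/k⌋ for every t ∈ {1,…,k}, and such that for at least one index t ∈ {1,…,k}, V_t is nonempty and every vertex v ∈ V_t has degree at most ⌊δ(v)/k⌋ in the subgraph of G induced by V_t, where δ(v) denotes the degree of v in G. -/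
open Finset

namespace SwapSchelling

variable {V : Type*} [Fintype V] [DecidableEq V]

lemma card_eq_erase {α : Type*} [DecidableEq α] (s : Finset α) (a : α) :
    s.card = (s.erase a).card + (if a ∈ s then 1 else 0) := by
  by_cases h : a ∈ s
  · rw [if_pos h, ← Finset.card_erase_add_one h]
  · rw [if_neg h, Finset.erase_eq_of_notMem h, Nat.add_zero]

open scoped Classical in
noncomputable def auxD (G : SimpleGraph V) (U : Finset V) {k : ℕ} (c : V → Fin k)
    (j : Fin k) (v : V) : ℕ :=
  (U.filter fun u => c u = j ∧ G.Adj v u).card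

open scoped Classical in
noncomputable def auxPhi (G : SimpleGraph V) (U : Finset V) {k : ℕ} (c : V → Fin k) : ℕ :=
  ∑ v ∈ U, auxD G U c (c v) v

open scoped Classical in
lemma auxPhi_update (G : SimpleGraph V) (U : Finset V) {k : ℕ} (c : V → Fin k)
    {v : V} (hv : v ∈ U) (j : Fin k) :
    auxPhi G U (Function.update c v j) + 2 * auxD G U c (c v) v
      = auxPhi G U c + 2 * auxD G U c j v := by
  classical
  set c' : V → Fin k := Function.update c v j with hc'
  have hc'v : c' v = j := Function.update_self v j c
  have hc'ne : ∀ w, w ≠ v → c' w = c w := fun w hw => Function.update_of_ne hw j c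
  have hDv : auxD G U c' j v = auxD G U c j v := by
    unfold auxD
    congr 1
    ext w
    by_cases hwv : w = v
    · subst hwv; simp [SimpleGraph.irrefl]
    · simp [hc'ne w hwv]
  have hpt : ∀ u ∈ U.erase v,
      auxD G U c' (c u) u + (if c v = c u ∧ G.Adj u v then 1 else 0)
        = auxD G U c (c u) u + (if j = c u ∧ G.Adj u v then 1 else 0) := by
    intro u hu
    obtain ⟨huv, huU⟩ := Finset.mem_erase.mp hu
    have hsets : (U.filter fun w => c' w = c u ∧ G.Adj u w).erase v
        = (U.filter fun w => c w = c u ∧ G.Adj u w).erase v := by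
      ext w
      simp only [Finset.mem_erase, Finset.mem_filter]
      constructor
      · rintro ⟨hw1, hw2, hw3, hw4⟩
        exact ⟨hw1, hw2, by rw [← hc'ne w hw1]; exact hw3, hw4⟩
      · rintro ⟨hw1, hw2, hw3, hw4⟩
        exact ⟨hw1, hw2, by rw [hc'ne w hw1]; exact hw3, hw4⟩
    have e1 := card_eq_erase (U.filter fun w => c' w = c u ∧ G.Adj u w) v
    have e2 := card_eq_erase (U.filter fun w => c w = c u ∧ G.Adj u w) v
    rw [hsets] at e1
    have m1 : (v ∈ U.filter fun w => c' w = c u ∧ G.Adj u w) ↔ (j = c u ∧ G.Adj u v) := by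
      simp [Finset.mem_filter, hv, hc'v]
    have m2 : (v ∈ U.filter fun w => c w = c u ∧ G.Adj u w) ↔ (c v = c u ∧ G.Adj u v) := by
      simp [Finset.mem_filter, hv]
    simp only [m1] at e1
    simp only [m2] at e2
    unfold auxD
    omega
  have hsum : (∑ u ∈ U.erase v, auxD G U c' (c u) u) + auxD G U c (c v) v
      = (∑ u ∈ U.erase v, auxD G U c (c u) u) + auxD G U c j v := by
    have h1 := Finset.sum_congr rfl hpt
    rw [Finset.sum_add_distrib, Finset.sum_add_distrib] at h1
    have hF : (∑ u ∈ U.erase v, if c v = c u ∧ G.Adj u v then 1 else 0)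
        = auxD G U c (c v) v := by
      rw [← Finset.card_filter]
      unfold auxD
      congr 1
      ext u
      simp only [Finset.mem_filter, Finset.mem_erase]
      constructor
      · rintro ⟨⟨hne, hU⟩, h1, h2⟩; exact ⟨hU, h1.symm, h2.symm⟩
      · rintro ⟨hU, h1, h2⟩
        have hne : u ≠ v := by
          intro h; subst h; exact G.irrefl h2
        exact ⟨⟨hne, hU⟩, h1.symm, h2.symm⟩
    have hE : (∑ u ∈ U.erase v, if j = c u ∧ G.Adj u v then 1 else 0)
        = auxD G U c j v := by
      rw [← Finset.card_filter]
      unfold auxD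
      congr 1
      ext u
      simp only [Finset.mem_filter, Finset.mem_erase]
      constructor
      · rintro ⟨⟨hne, hU⟩, h1, h2⟩; exact ⟨hU, h1.symm, h2.symm⟩
      · rintro ⟨hU, h1, h2⟩
        have hne : u ≠ v := by
          intro h; subst h; exact G.irrefl h2
        exact ⟨⟨hne, hU⟩, h1.symm, h2.symm⟩
    rw [hF, hE] at h1
    omega
  have hdec1 : auxPhi G U c' = auxD G U c j v + ∑ u ∈ U.erase v, auxD G U c' (c u) u := by
    unfold auxPhi
    rw [← Finset.add_sum_erase _ _ hv, hc'v, hDv]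
    congr 1
    refine Finset.sum_congr rfl fun u hu => ?_
    rw [hc'ne u (Finset.mem_erase.mp hu).1]
  have hdec2 : auxPhi G U c = auxD G U c (c v) v + ∑ u ∈ U.erase v, auxD G U c (c u) u := by
    unfold auxPhi
    rw [← Finset.add_sum_erase _ _ hv]
  omega

open scoped Classical in
lemma exists_good (G : SimpleGraph V) {k : ℕ} (hk : 0 < k) (U : Finset V) :
    ∃ c : V → Fin k, ∀ v ∈ U, ∀ j, auxD G U c (c v) v ≤ auxD G U c j v := by
  classical
  obtain ⟨c, -, hmin⟩ := Finset.exists_min_image (Finset.univ : Finset (V → Fin k))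
    (auxPhi G U) ⟨fun _ => ⟨0, hk⟩, Finset.mem_univ _⟩
  refine ⟨c, fun v hv j => ?_⟩
  have h1 := auxPhi_update G U c hv j
  have h2 := hmin _ (Finset.mem_univ (Function.update c v j))
  omega

open scoped Classical in
lemma good_bound (G : SimpleGraph V) {k : ℕ} (hk : 0 < k) (U : Finset V)
    (c : V → Fin k) (v : V)
    (hgood : ∀ j, auxD G U c (c v) v ≤ auxD G U c j v) :
    auxD G U c (c v) v ≤ deg G v / k := by
  have hsum : (U.filter fun u => G.Adj v u).card = ∑ j : Fin k, auxD G U c j v := by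
    rw [Finset.card_eq_sum_card_fiberwise (f := c) (t := Finset.univ)
      (fun x _ => Finset.mem_univ _)]
    refine Finset.sum_congr rfl fun j _ => ?_
    unfold auxD
    rw [Finset.filter_filter]
    congr 1
    ext u
    simp only [Finset.mem_filter]
    tauto
  have hmul : k * auxD G U c (c v) v ≤ ∑ j : Fin k, auxD G U c j v := by
    calc k * auxD G U c (c v) v = ∑ _j : Fin k, auxD G U c (c v) v := by
          rw [Finset.sum_const, Finset.card_univ, Fintype.card_fin, smul_eq_mul]
      _ ≤ _ := Finset.sum_le_sum fun j _ => hgood j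
  have h2 : (U.filter fun u => G.Adj v u).card ≤ deg G v := by
    unfold deg
    exact Finset.card_le_card (Finset.filter_subset_filter _ (Finset.subset_univ U))
  rw [Nat.le_div_iff_mul_le hk, mul_comm]
  omega

lemma exists_parts (r q : ℕ) :
    ∀ S : Finset V, r * q ≤ S.card →
      ∃ P : Fin r → Finset V, (∀ i, P i ⊆ S) ∧
        (∀ i i', i ≠ i' → Disjoint (P i) (P i')) ∧ ∀ i, (P i).card = q := by
  induction r with
  | zero =>
      intro S _
      exact ⟨fun i => i.elim0, fun i => i.elim0, fun i => i.elim0, fun i => i.elim0⟩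
  | succ r ih =>
      intro S h
      have hq : q ≤ S.card := by
        have h1 : q ≤ (r + 1) * q := Nat.le_mul_of_pos_left q (Nat.succ_pos r)
        omega
      obtain ⟨T, hTS, hTcard⟩ := Finset.exists_subset_card_eq (s := S) hq
      have h2 : r * q ≤ (S \ T).card := by
        rw [Finset.card_sdiff_of_subset hTS, hTcard]
        have h3 : (r + 1) * q = r * q + q := by ring
        omega
      obtain ⟨P', h1', h2', h3'⟩ := ih (S \ T) h2
      refine ⟨Fin.cons T P', ?_, ?_, ?_⟩
      · intro i
        induction i using Fin.cases with
        | zero => simpa using hTS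
        | succ a => simpa using (h1' a).trans Finset.sdiff_subset
      · intro i i' hne
        induction i using Fin.cases with
        | zero =>
            induction i' using Fin.cases with
            | zero => exact absurd rfl hne
            | succ b =>
                simp only [Fin.cons_zero, Fin.cons_succ]
                exact Finset.disjoint_sdiff.mono_right (h1' b)
        | succ a =>
            induction i' using Fin.cases with
            | zero =>
                simp only [Fin.cons_zero, Fin.cons_succ]
                exact (Finset.disjoint_sdiff.mono_right (h1' a)).symm
            | succ b =>
                simp only [Fin.cons_succ]
                exact h2' a b (fun h => hne (congrArg Fin.succ h))
      · intro i
        induction i using Fin.cases with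
        | zero => simpa using hTcard
        | succ a => simpa using h3' a

/-- For every graph `G`, every `k ≥ 1` and every vertex subset `U` with
`|U| ≥ 2`, there is a balanced `k`-partition `{V_1,…,V_k}` of `U` (each part of size at
least `⌊|U|/k⌋`) such that some part `V_t` is nonempty and every `v ∈ V_t` has degree at
most `⌊δ(v)/k⌋` in the subgraph of `G` induced by `V_t`. -/
theorem balanced_k_max_cut
    {V : Type*} [Fintype V] [DecidableEq V] (G : SimpleGraph V)
    (k : ℕ) (hk : 1 ≤ k) (U : Finset V) (hU : 2 ≤ U.card) :
    ∃ P : Fin k → Finset V,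
      (∀ s t : Fin k, s ≠ t → Disjoint (P s) (P t)) ∧
      (Finset.univ.biUnion P = U) ∧
      (∀ t : Fin k, U.card / k ≤ (P t).card) ∧
      (∃ t : Fin k, (P t).Nonempty ∧
        ∀ v ∈ P t, degOn G (P t) v ≤ deg G v / k) := by
  classical
  rcases eq_or_lt_of_le hk with hk1 | hk2
  · -- k = 1
    subst hk1
    have hUne0 : U.Nonempty := Finset.card_pos.mp (by omega)
    have hUne : ((fun _ : Fin 1 => U) 0).Nonempty := hUne0
    refine ⟨fun _ => U, fun s t' hst => absurd (Subsingleton.elim s t') hst, ?_, ?_,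
      ⟨0, hUne, ?_⟩⟩
    · ext x
      simp [Finset.mem_biUnion]
    · intro _
      rw [Nat.div_one]
    · intro v hv
      rw [Nat.div_one]
      unfold degOn deg
      exact Finset.card_le_card (Finset.filter_subset_filter _ (Finset.subset_univ U))
  have hk0 : 0 < k := hk
  obtain ⟨c, hc⟩ := exists_good G hk0 U
  obtain ⟨t, -, hmax⟩ := Finset.exists_max_image (Finset.univ : Finset (Fin k))
    (fun j => (U.filter fun u => c u = j).card) ⟨⟨0, hk0⟩, Finset.mem_univ _⟩
  set n := U.card with hn
  set q := n / k with hq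
  have hnsum : n = ∑ j : Fin k, (U.filter fun u => c u = j).card :=
    Finset.card_eq_sum_card_fiberwise (fun x _ => Finset.mem_univ (c x))
  have hnk : n ≤ k * (U.filter fun u => c u = t).card := by
    calc n = ∑ j : Fin k, (U.filter fun u => c u = j).card := hnsum
      _ ≤ ∑ _j : Fin k, (U.filter fun u => c u = t).card :=
          Finset.sum_le_sum fun j _ => hmax j (Finset.mem_univ j)
      _ = k * _ := by rw [Finset.sum_const, Finset.card_univ, Fintype.card_fin, smul_eq_mul]
  have hM1 : 1 ≤ (U.filter fun u => c u = t).card := by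
    rcases Nat.eq_zero_or_pos (U.filter fun u => c u = t).card with h0 | h1
    · rw [h0, Nat.mul_zero] at hnk; omega
    · exact h1
  have hqM : q ≤ (U.filter fun u => c u = t).card := by
    have h := Nat.div_le_div_right (c := k) hnk
    rwa [Nat.mul_div_cancel_left _ hk0] at h
  set m := max q 1 with hm
  have hmM : m ≤ (U.filter fun u => c u = t).card := max_le hqM hM1
  obtain ⟨Pt, hPtsub, hPtcard⟩ := Finset.exists_subset_card_eq hmM
  have hPtU : Pt ⊆ U := hPtsub.trans (Finset.filter_subset _ _)
  have hkq : k * q ≤ n := by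
    rw [hq, mul_comm]; exact Nat.div_mul_le_self n k
  have hPtgood : ∀ v ∈ Pt, degOn G Pt v ≤ deg G v / k := by
    intro v hvPt
    have hvU : v ∈ U := hPtU hvPt
    have hcv : c v = t := (Finset.mem_filter.mp (hPtsub hvPt)).2
    have h1 : degOn G Pt v ≤ degOn G (U.filter fun u => c u = t) v :=
      Finset.card_le_card (Finset.filter_subset_filter _ hPtsub)
    have h2 : degOn G (U.filter fun u => c u = t) v = auxD G U c t v := by
      unfold degOn auxD
      rw [Finset.filter_filter]
    have h3 := good_bound G hk0 U c v (hc v hvU)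
    rw [hcv] at h3
    omega
  obtain ⟨k', rfl⟩ : ∃ k', k = k' + 1 := ⟨k - 1, by omega⟩
  have hk'1 : 1 ≤ k' := by omega
  set i0 : Fin k' := ⟨0, hk'1⟩ with hi0
  set R := U \ Pt with hRdef
  have hRcard : R.card = n - m := by
    rw [hRdef, Finset.card_sdiff_of_subset hPtU, hPtcard]
  have hsplit : k' * q ≤ R.card := by
    rcases Nat.eq_zero_or_pos q with h0 | h1
    · simp [h0]
    · have hmq : m = q := by rw [hm]; omega
      have h3 : (k' + 1) * q = k' * q + q := by ring
      omega
  obtain ⟨P', hP'sub, hP'disj, hP'card⟩ := exists_parts k' q R hsplit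
  set L := R \ Finset.univ.biUnion P' with hLdef
  set P0 : Fin k' → Finset V := Function.update P' i0 (P' i0 ∪ L) with hP0def
  have hP0sub : ∀ i, P0 i ⊆ R := by
    intro i
    rcases eq_or_ne i i0 with rfl | hi
    · rw [hP0def, Function.update_self]
      exact Finset.union_subset (hP'sub i0) Finset.sdiff_subset
    · rw [hP0def, Function.update_of_ne hi]
      exact hP'sub i
  have hLdisj : ∀ i, Disjoint L (P' i) := by
    intro i
    rw [Finset.disjoint_left]
    intro x hxL hxP
    exact (Finset.mem_sdiff.mp hxL).2
      (Finset.mem_biUnion.mpr ⟨i, Finset.mem_univ i, hxP⟩)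
  have hP0disj : ∀ i i', i ≠ i' → Disjoint (P0 i) (P0 i') := by
    intro i i' hne
    rcases eq_or_ne i i0 with rfl | hi <;> rcases eq_or_ne i' i0 with rfl | hi'
    · exact absurd rfl hne
    · rw [hP0def, Function.update_self, Function.update_of_ne hi']
      exact Finset.disjoint_union_left.mpr ⟨hP'disj i0 i' hne, hLdisj i'⟩
    · rw [hP0def, Function.update_self, Function.update_of_ne hi]
      exact (Finset.disjoint_union_left.mpr ⟨hP'disj i0 i (fun h => hi h.symm), hLdisj i⟩).symm
    · rw [hP0def, Function.update_of_ne hi, Function.update_of_ne hi']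
      exact hP'disj i i' hne
  have hP0cover : ∀ x ∈ R, ∃ i, x ∈ P0 i := by
    intro x hx
    by_cases hxb : x ∈ Finset.univ.biUnion P'
    · obtain ⟨i, -, hi⟩ := Finset.mem_biUnion.mp hxb
      rcases eq_or_ne i i0 with rfl | hi'
      · exact ⟨i0, by rw [hP0def, Function.update_self]; exact Finset.mem_union_left _ hi⟩
      · exact ⟨i, by rw [hP0def, Function.update_of_ne hi']; exact hi⟩
    · exact ⟨i0, by
        rw [hP0def, Function.update_self]
        exact Finset.mem_union_right _ (Finset.mem_sdiff.mpr ⟨hx, hxb⟩)⟩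
  have hP0card : ∀ i, q ≤ (P0 i).card := by
    intro i
    rcases eq_or_ne i i0 with rfl | hi
    · rw [hP0def, Function.update_self]
      exact le_trans (le_of_eq (hP'card i0).symm)
        (Finset.card_le_card Finset.subset_union_left)
    · rw [hP0def, Function.update_of_ne hi]
      exact le_of_eq (hP'card i).symm
  have hexists : ∀ j : Fin (k' + 1), j ≠ t → ∃ i : Fin k', t.succAbove i = j :=
    fun j hj => Fin.exists_succAbove_eq hj
  set P : Fin (k' + 1) → Finset V :=
    fun jj => if h : jj = t then Pt else P0 (hexists jj h).choose with hPdef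
  have hPt : P t = Pt := by rw [hPdef]; exact dif_pos rfl
  have hPj : ∀ (jy : Fin (k' + 1)) (h : jy ≠ t), P jy = P0 (hexists jy h).choose := by
    intro jy h
    rw [hPdef]
    exact dif_neg h
  have hchoose : ∀ (jy : Fin (k' + 1)) (h : jy ≠ t),
      t.succAbove (hexists jy h).choose = jy := fun jy h => (hexists jy h).choose_spec
  have hP0all : ∀ i : Fin k', P (t.succAbove i) = P0 i := by
    intro i
    have hne : t.succAbove i ≠ t := Fin.succAbove_ne t i
    rw [hPj _ hne]
    congr 1
    have := hchoose _ hne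
    exact Fin.succAbove_right_injective this
  refine ⟨P, ?_, ?_, ?_, ⟨t, ?_, ?_⟩⟩
  · intro s s' hss'
    by_cases hs : s = t <;> by_cases hs' : s' = t
    · exact absurd (hs.trans hs'.symm) hss'
    · subst hs
      rw [hPt, hPj s' hs']
      exact Finset.disjoint_sdiff.mono_right (hP0sub _)
    · subst hs'
      rw [hPt, hPj s hs]
      exact (Finset.disjoint_sdiff.mono_right (hP0sub _)).symm
    · rw [hPj s hs, hPj s' hs']
      refine hP0disj _ _ fun h => hss' ?_
      rw [← hchoose s hs, ← hchoose s' hs', h]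
  · ext x
    simp only [Finset.mem_biUnion, Finset.mem_univ, true_and]
    constructor
    · rintro ⟨jj, hx⟩
      by_cases hj : jj = t
      · subst hj; rw [hPt] at hx; exact hPtU hx
      · rw [hPj jj hj] at hx
        exact (Finset.mem_sdiff.mp (hP0sub _ hx)).1
    · intro hxU
      by_cases hx : x ∈ Pt
      · exact ⟨t, by rw [hPt]; exact hx⟩
      · obtain ⟨i, hi⟩ := hP0cover x (Finset.mem_sdiff.mpr ⟨hxU, hx⟩)
        exact ⟨t.succAbove i, by rw [hP0all i]; exact hi⟩
  · intro jy
    by_cases hj : jy = t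
    · subst hj
      rw [hPt, hPtcard]
      exact le_max_left q 1
    · rw [hPj jy hj]
      exact hP0card _
  · rw [hPt]
    exact Finset.card_pos.mp (by omega)
  · rw [hPt]
    exact hPtgood


end SwapSchelling
end
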